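/- Let d ≥ 2 be even, k ≥ 2, n ≥ 2, and let 𝒞(n) ⊆ F(ℝ^d,k)^n be the set of n-tuples (C_1,…,C_n) of colinear configurations with L_{C_1} = L_{C_2} = ⋯ = L_{C_n}. Then there is a continuous section Γ̄_n : 𝒞(n) → P(F(ℝ^d,k)) of the evaluation map e_n over 𝒞(n), given by concatenating the paths Γ̄(C_i, C_{i+1}) for i = 1,…,n−1, where Γ̄ is the explicit continuous section of e_2 over pairs of colinear configurations with a common line (constructed using the unit tangent vector field v(x_1,y_1,…,x_ℓ,y_ℓ) = (−y_1,x_1,…,−y_ℓ,x_ℓ) on S^{d−1}, d = 2ℓ). -/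

import Mathlib

open unitInterval

noncomputable section

/-- Euclidean space ℝ^d. -/
abbrev E (d : ℕ) : Type := EuclideanSpace ℝ (Fin d)

/-- The ordered configuration space F(ℝ^d, k) of k distinct points in ℝ^d,
viewed as the subspace of (ℝ^d)^k of injective tuples. -/
def Conf (d k : ℕ) : Set (Fin k → E d) := {x | Function.Injective x}

/-- The time i/(n-1) ∈ [0,1] at which the i-th configuration is visited. -/
def eTime (n : ℕ) (i : Fin n) : unitInterval :=
  Set.projIcc 0 1 zero_le_one ((i : ℝ) / ((n : ℝ) - 1))

/-- The evaluation map e_n : P(X) → X^n,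
e_n(γ) = (γ(0), γ(1/(n-1)), …, γ((n-2)/(n-1)), γ(1)). -/
def evalMap {X : Type*} [TopologicalSpace X] (n : ℕ) (γ : C(unitInterval, X)) : Fin n → X :=
  fun i => γ (eTime n i)

/-- `A ⊆ X^n` admits a continuous section of the evaluation map e_n. -/
def HasSec {X : Type*} [TopologicalSpace X] (n : ℕ) (A : Set (Fin n → X)) : Prop :=
  ∃ s : A → C(unitInterval, X), Continuous s ∧ ∀ a : A, evalMap n (s a) = (a : Fin n → X)

/-- The orienting unit vector e_C = (x_2 - x_1)/|x_2 - x_1| of the line L_C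
through x_1 and x_2. -/
def eV {d k : ℕ} (hk : 2 ≤ k) (C : Fin k → E d) : E d :=
  ‖C ⟨1, by omega⟩ - C ⟨0, by omega⟩‖⁻¹ • (C ⟨1, by omega⟩ - C ⟨0, by omega⟩)

/-- The orthogonal projection p_C : ℝ^d → L_C onto the affine line L_C
through x_1 and x_2. -/
def pC {d k : ℕ} (hk : 2 ≤ k) (C : Fin k → E d) (x : E d) : E d :=
  C ⟨0, by omega⟩ + (inner ℝ (x - C ⟨0, by omega⟩) (eV hk C) : ℝ) • eV hk C

/-- c̄p(C) = cardinality of {p_C(x_1),…,p_C(x_k)}. -/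
def cpBar {d k : ℕ} (hk : 2 ≤ k) (C : Fin k → E d) : ℕ :=
  (Set.range fun i => pC hk C (C i)).ncard

/-- The affine line L_C through x_1 and x_2. -/
def lineC {d k : ℕ} (hk : 2 ≤ k) (C : Fin k → E d) : Set (E d) :=
  {y | ∃ r : ℝ, y = C ⟨0, by omega⟩ + r • eV hk C}

/-- C is colinear: all its points lie on L_C. -/
def Colin {d k : ℕ} (hk : 2 ≤ k) (C : Fin k → E d) : Prop :=
  ∀ i : Fin k, C i ∈ lineC hk C

/-- The unit tangent vector field v on S^{d-1} for even d = 2ℓ: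
v(x_1,y_1,…,x_ℓ,y_ℓ) = (-y_1,x_1,…,-y_ℓ,x_ℓ). -/
def vf {d : ℕ} (hd : Even d) (x : E d) : E d :=
  (WithLp.equiv 2 (Fin d → ℝ)).symm fun j =>
    if h : (j : ℕ) % 2 = 0 then -(x ⟨(j : ℕ) + 1, by obtain ⟨r, hr⟩ := hd; omega⟩)
    else x ⟨(j : ℕ) - 1, by omega⟩

/-- The i-th component of the path Γ̄^{C,C'} (the paper index i ∈ {1,…,k}
corresponds to (i:ℕ)+1 for i : Fin k): x_i + 3ti·v(e_C) on [0,1/3];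
x_i + i·v(e_C) + (3t-1)(x'_i - x_i) on [1/3,2/3]; x'_i + i(3-3t)·v(e_C)
on [2/3,1]. -/
def gammaBar {d k : ℕ} (hd : Even d) (hk : 2 ≤ k) (C C' : Fin k → E d)
    (i : Fin k) (t : ℝ) : E d :=
  if t ≤ 1 / 3 then C i + (3 * t * ((i : ℝ) + 1)) • vf hd (eV hk C)
  else if t ≤ 2 / 3 then C i + ((i : ℝ) + 1) • vf hd (eV hk C) + (3 * t - 1) • (C' i - C i)
  else C' i + (((i : ℝ) + 1) * (3 - 3 * t)) • vf hd (eV hk C)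


/-- The set 𝒞(n) of n-tuples of colinear configurations with a common line
L_{C_1} = ⋯ = L_{C_n}. -/
def Ctup (d k n : ℕ) (hk : 2 ≤ k) (hn : 2 ≤ n) : Set (Fin n → (Fin k → E d)) :=
  {C | (∀ m : Fin n, C m ∈ Conf d k ∧ Colin hk (C m)) ∧
    ∀ m : Fin n, lineC hk (C m) = lineC hk (C ⟨0, by omega⟩)}

/-- The concatenation Γ̄_n(C_1,…,C_n) = Γ̄(C_1,C_2)·⋯·Γ̄(C_{n-1},C_n), the i-th
constituent path traversed on [(i-1)/(n-1), i/(n-1)]. -/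
def gammaBarN {d k n : ℕ} (hd : Even d) (hk : 2 ≤ k) (hn : 2 ≤ n)
    (C : Fin n → (Fin k → E d)) (t : ℝ) : Fin k → E d :=
  let j : ℕ := min (⌊t * ((n : ℝ) - 1)⌋₊) (n - 2)
  fun i => gammaBar hd hk (C ⟨j, by omega⟩) (C ⟨j + 1, by omega⟩) i
    (t * ((n : ℝ) - 1) - (j : ℝ))


-- ===== auxiliary lemmas =====

lemma vf_apply_even {d : ℕ} (hd : Even d) (x : E d) (j : Fin d) (hj : (j : ℕ) % 2 = 0)
    (hj1 : (j : ℕ) + 1 < d) : vf hd x j = -(x ⟨(j : ℕ) + 1, hj1⟩) := by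
  simp only [vf, WithLp.equiv_symm_apply, PiLp.toLp_apply, dif_pos hj]

lemma vf_apply_odd {d : ℕ} (hd : Even d) (x : E d) (j : Fin d) (hj : ¬ (j : ℕ) % 2 = 0)
    (hj1 : (j : ℕ) - 1 < d) : vf hd x j = x ⟨(j : ℕ) - 1, hj1⟩ := by
  simp only [vf, WithLp.equiv_symm_apply, PiLp.toLp_apply, dif_neg hj]

/-- the pairing involution -/
def sw {d : ℕ} (hd : Even d) (j : Fin d) : Fin d :=
  if h : (j : ℕ) % 2 = 0 then ⟨(j : ℕ) + 1, by obtain ⟨r, hr⟩ := hd; omega⟩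
  else ⟨(j : ℕ) - 1, lt_of_le_of_lt (Nat.sub_le _ _) j.isLt⟩

lemma sw_val {d : ℕ} (hd : Even d) (j : Fin d) :
    ((sw hd j : Fin d) : ℕ) = if (j : ℕ) % 2 = 0 then (j : ℕ) + 1 else (j : ℕ) - 1 := by
  by_cases h : (j : ℕ) % 2 = 0 <;> simp [sw, h]

lemma inner_vf {d : ℕ} (hd : Even d) (x : E d) : (inner ℝ x (vf hd x) : ℝ) = 0 := by
  rw [PiLp.inner_apply]
  refine Finset.sum_ninvolution (sw hd) ?_ ?_ (fun a => Finset.mem_univ _) ?_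
  · intro a
    by_cases h0 : (a : ℕ) % 2 = 0
    · have hlt : (a : ℕ) + 1 < d := by obtain ⟨r, hr⟩ := hd; have := a.isLt; omega
      have hsw : sw hd a = ⟨(a : ℕ) + 1, hlt⟩ := by
        ext; rw [sw_val hd a, if_pos h0]
      have h1 : ¬ (((⟨(a : ℕ) + 1, hlt⟩ : Fin d) : ℕ) % 2 = 0) := by
        simp only [Fin.val_mk]; omega
      have h2 : ((⟨(a : ℕ) + 1, hlt⟩ : Fin d) : ℕ) - 1 < d := by
        simp only [Fin.val_mk]; omega
      rw [hsw, vf_apply_even hd x a h0 hlt, vf_apply_odd hd x _ h1 h2]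
      have : (⟨((⟨(a : ℕ) + 1, hlt⟩ : Fin d) : ℕ) - 1, h2⟩ : Fin d) = a := by
        ext; simp
      rw [this]
      simp [RCLike.inner_apply]
      ring
    · have hlt : (a : ℕ) - 1 < d := lt_of_le_of_lt (Nat.sub_le _ _) a.isLt
      have hsw : sw hd a = ⟨(a : ℕ) - 1, hlt⟩ := by
        ext; rw [sw_val hd a, if_neg h0]
      have h1 : (((⟨(a : ℕ) - 1, hlt⟩ : Fin d) : ℕ) % 2 = 0) := by
        simp only [Fin.val_mk]; omega
      have h2 : ((⟨(a : ℕ) - 1, hlt⟩ : Fin d) : ℕ) + 1 < d := by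
        simp only [Fin.val_mk]; have := a.isLt; omega
      rw [hsw, vf_apply_odd hd x a h0 hlt, vf_apply_even hd x _ h1 h2]
      have : (⟨((⟨(a : ℕ) - 1, hlt⟩ : Fin d) : ℕ) + 1, h2⟩ : Fin d) = a := by
        ext; simp; omega
      rw [this]
      simp [RCLike.inner_apply]
      ring
  · intro a _
    refine Fin.ne_of_val_ne ?_
    rw [sw_val hd a]
    by_cases h0 : (a : ℕ) % 2 = 0 <;> simp [h0] <;> omega
  · intro a
    ext
    rw [sw_val hd _, sw_val hd a]
    by_cases h0 : (a : ℕ) % 2 = 0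
    · rw [if_pos h0, if_neg (by omega : ¬ ((a : ℕ) + 1) % 2 = 0)]
      omega
    · rw [if_neg h0, if_pos (by omega : ((a : ℕ) - 1) % 2 = 0)]
      omega

lemma vf_ne_zero {d : ℕ} (hd : Even d) {x : E d} (hx : x ≠ 0) : vf hd x ≠ 0 := by
  intro h
  apply hx
  ext m
  by_cases h0 : (m : ℕ) % 2 = 0
  · have hlt : (m : ℕ) + 1 < d := by obtain ⟨r, hr⟩ := hd; have := m.isLt; omega
    have h1 : ¬ (((⟨(m : ℕ) + 1, hlt⟩ : Fin d) : ℕ) % 2 = 0) := by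
      simp only [Fin.val_mk]; omega
    have h2 : ((⟨(m : ℕ) + 1, hlt⟩ : Fin d) : ℕ) - 1 < d := by
      simp only [Fin.val_mk]; omega
    have hc : vf hd x ⟨(m : ℕ) + 1, hlt⟩ = (0 : E d) ⟨(m : ℕ) + 1, hlt⟩ := by rw [h]
    rw [show (0 : E d) ⟨(m : ℕ) + 1, hlt⟩ = 0 from rfl] at hc
    rw [vf_apply_odd hd x _ h1 h2] at hc
    have he : (⟨((⟨(m : ℕ) + 1, hlt⟩ : Fin d) : ℕ) - 1, h2⟩ : Fin d) = m := by ext; simp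
    rw [he] at hc
    simpa using hc
  · have hlt : (m : ℕ) - 1 < d := lt_of_le_of_lt (Nat.sub_le _ _) m.isLt
    have h1 : (((⟨(m : ℕ) - 1, hlt⟩ : Fin d) : ℕ) % 2 = 0) := by
      simp only [Fin.val_mk]; omega
    have h2 : ((⟨(m : ℕ) - 1, hlt⟩ : Fin d) : ℕ) + 1 < d := by
      simp only [Fin.val_mk]; have := m.isLt; omega
    have hc : vf hd x ⟨(m : ℕ) - 1, hlt⟩ = (0 : E d) ⟨(m : ℕ) - 1, hlt⟩ := by rw [h]
    rw [show (0 : E d) ⟨(m : ℕ) - 1, hlt⟩ = 0 from rfl] at hc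
    rw [vf_apply_even hd x _ h1 h2] at hc
    have he : (⟨((⟨(m : ℕ) - 1, hlt⟩ : Fin d) : ℕ) + 1, h2⟩ : Fin d) = m := by ext; simp; omega
    rw [he] at hc
    simpa [neg_eq_zero] using hc

lemma eV_ne_zero {d k : ℕ} (hk : 2 ≤ k) {C : Fin k → E d} (hC : C ∈ Conf d k) :
    eV hk C ≠ 0 := by
  have hne : C ⟨1, by omega⟩ - C ⟨0, by omega⟩ ≠ 0 := by
    rw [sub_ne_zero]
    exact fun h => absurd (hC h) (by simp [Fin.ext_iff])
  exact smul_ne_zero (inv_ne_zero (norm_ne_zero_iff.mpr hne)) hne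

lemma inner_eV_vf {d k : ℕ} (hd : Even d) (hk : 2 ≤ k) (C : Fin k → E d) :
    (inner ℝ (eV hk C) (vf hd (eV hk C)) : ℝ) = 0 := inner_vf hd _

lemma inner_line {d k : ℕ} (hd : Even d) (hk : 2 ≤ k) {C : Fin k → E d} {y : E d}
    (hy : y ∈ lineC hk C) :
    (inner ℝ y (vf hd (eV hk C)) : ℝ) = inner ℝ (C ⟨0, by omega⟩) (vf hd (eV hk C)) := by
  obtain ⟨r, hr⟩ := hy
  rw [hr, inner_add_left, real_inner_smul_left, inner_eV_vf hd hk C]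
  ring

lemma gammaBar_zero {d k : ℕ} (hd : Even d) (hk : 2 ≤ k) (C C' : Fin k → E d) (i : Fin k) :
    gammaBar hd hk C C' i 0 = C i := by
  simp [gammaBar]

lemma gammaBar_one {d k : ℕ} (hd : Even d) (hk : 2 ≤ k) (C C' : Fin k → E d) (i : Fin k) :
    gammaBar hd hk C C' i 1 = C' i := by
  rw [gammaBar, if_neg (by norm_num), if_neg (by norm_num)]
  norm_num

lemma gammaBar_inj {d k : ℕ} (hd : Even d) (hk : 2 ≤ k) {C C' : Fin k → E d}
    (hC : C ∈ Conf d k) (hC' : C' ∈ Conf d k) (hcol : Colin hk C) (hcol' : Colin hk C')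
    (hline : lineC hk C' = lineC hk C) {t : ℝ} (ht0 : 0 ≤ t) (ht1 : t ≤ 1) :
    Function.Injective fun i => gammaBar hd hk C C' i t := by
  set e := eV hk C with he
  set v := vf hd e with hv
  have hvne : v ≠ 0 := vf_ne_zero hd (eV_ne_zero hk hC)
  have hvv : (inner ℝ v v : ℝ) ≠ 0 := by
    rw [ne_eq, inner_self_eq_zero]; exact hvne
  have hCl : ∀ i : Fin k, (inner ℝ (C i) v : ℝ) = inner ℝ (C ⟨0, by omega⟩) v :=
    fun i => inner_line hd hk (hcol i)
  have hC'l : ∀ i : Fin k, (inner ℝ (C' i) v : ℝ) = inner ℝ (C ⟨0, by omega⟩) v :=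
    fun i => inner_line hd hk (hline ▸ hcol' i)
  have hfin : ∀ i j : Fin k, ((i : ℕ) : ℝ) + 1 = ((j : ℕ) : ℝ) + 1 → i = j := by
    intro i j h
    have : ((i : ℕ) : ℝ) = ((j : ℕ) : ℝ) := by linarith
    exact Fin.ext (by exact_mod_cast this)
  intro i j hij
  simp only [gammaBar] at hij
  split_ifs at hij with h1 h2
  · rcases eq_or_ne t 0 with rfl | htne
    · simp only [mul_zero, zero_mul, zero_smul, add_zero] at hij
      exact hC hij
    · have key := congrArg (fun y : E d => (inner ℝ y v : ℝ)) hij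
      simp only [inner_add_left, real_inner_smul_left, hCl] at key
      have : 3 * t * ((i : ℝ) + 1) = 3 * t * ((j : ℝ) + 1) :=
        mul_right_cancel₀ hvv (by linarith)
      exact hfin i j (by
        have h3 : (3 : ℝ) * t ≠ 0 := by positivity
        exact mul_left_cancel₀ h3 this)
  · have key := congrArg (fun y : E d => (inner ℝ y v : ℝ)) hij
    have hsub : ∀ m : Fin k, (inner ℝ (C' m - C m) v : ℝ) = 0 := by
      intro m; rw [inner_sub_left, hCl, hC'l, sub_self]
    simp only [inner_add_left, real_inner_smul_left, hCl, hsub, mul_zero, add_zero] at key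
    have : (i : ℝ) + 1 = (j : ℝ) + 1 := mul_right_cancel₀ hvv (by linarith)
    exact hfin i j this
  · rcases eq_or_ne t 1 with rfl | htne
    · norm_num at hij
      exact hC' hij
    · have key := congrArg (fun y : E d => (inner ℝ y v : ℝ)) hij
      simp only [inner_add_left, real_inner_smul_left, hC'l] at key
      have : ((i : ℝ) + 1) * (3 - 3 * t) = ((j : ℝ) + 1) * (3 - 3 * t) :=
        mul_right_cancel₀ hvv (by linarith)
      have h3 : (3 : ℝ) - 3 * t ≠ 0 := by
        intro h; apply htne; linarith
      exact hfin i j (mul_right_cancel₀ h3 this)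

-- ===== continuity lemmas =====

lemma continuous_vf {d : ℕ} (hd : Even d) : Continuous (vf hd) := by
  unfold vf
  refine (PiLp.continuous_toLp _ _).comp ?_
  refine continuous_pi fun j => ?_
  by_cases h : (j : ℕ) % 2 = 0
  · simp only [dif_pos h]
    exact ((continuous_apply _).comp (PiLp.continuous_ofLp 2 fun _ : Fin d => ℝ)).neg
  · simp only [dif_neg h]
    exact (continuous_apply _).comp (PiLp.continuous_ofLp 2 fun _ : Fin d => ℝ)

lemma continuous_eV {d k : ℕ} (hk : 2 ≤ k) {X : Type*} [TopologicalSpace X]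
    {f : X → Fin k → E d} (hf : Continuous f) (hc : ∀ x, f x ∈ Conf d k) :
    Continuous fun x => eV hk (f x) := by
  unfold eV
  have hsub : Continuous fun x => f x ⟨1, by omega⟩ - f x ⟨0, by omega⟩ :=
    ((continuous_apply _).comp hf).sub ((continuous_apply _).comp hf)
  refine Continuous.smul (Continuous.inv₀ hsub.norm ?_) hsub
  intro x
  refine norm_ne_zero_iff.mpr ?_
  rw [sub_ne_zero]
  exact fun h => absurd ((hc x) h) (by simp [Fin.ext_iff])

lemma continuous_gammaBar {d k : ℕ} (hd : Even d) (hk : 2 ≤ k) {X : Type*} [TopologicalSpace X]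
    {f g : X → Fin k → E d} {u : X → ℝ} (hf : Continuous f) (hg : Continuous g)
    (hu : Continuous u) (hc : ∀ x, f x ∈ Conf d k) (i : Fin k) :
    Continuous fun x => gammaBar hd hk (f x) (g x) i (u x) := by
  have hv : Continuous fun x => vf hd (eV hk (f x)) :=
    (continuous_vf hd).comp (continuous_eV hk hf hc)
  have hfi : Continuous fun x => f x i := (continuous_apply i).comp hf
  have hgi : Continuous fun x => g x i := (continuous_apply i).comp hg
  unfold gammaBar
  refine Continuous.if_le ?_ ?_ hu continuous_const ?_
  · exact hfi.add (((continuous_const.mul hu).mul continuous_const).smul hv)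
  · refine Continuous.if_le ?_ ?_ hu continuous_const ?_
    · exact (hfi.add ((continuous_const (y := ((i : ℝ) + 1))).smul hv)).add
        (((continuous_const.mul hu).sub continuous_const).smul (hgi.sub hfi))
    · exact hgi.add ((continuous_const.mul (continuous_const.sub
        (continuous_const.mul hu))).smul hv)
    · intro x hx
      rw [hx]
      rw [show 3 * (2/3 : ℝ) - 1 = 1 by norm_num, show (3 : ℝ) - 3 * (2/3) = 1 by norm_num,
        one_smul, mul_one]
      abel
  · intro x hx
    rw [hx, if_pos (by norm_num : (1/3 : ℝ) ≤ 2/3)]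
    rw [show (3 : ℝ) * (1/3) = 1 by norm_num, one_mul, sub_self, zero_smul, add_zero]

-- ===== gammaBarN lemmas =====

lemma gammaBarN_piece {d k n : ℕ} (hd : Even d) (hk : 2 ≤ k) (hn : 2 ≤ n)
    (C : Fin n → (Fin k → E d)) {t : ℝ} {j : ℕ} (hjn : j ≤ n - 2)
    (h0 : (j : ℝ) ≤ t * ((n : ℝ) - 1)) (h1 : t * ((n : ℝ) - 1) ≤ (j : ℝ) + 1) :
    gammaBarN hd hk hn C t =
      fun i => gammaBar hd hk (C ⟨j, by omega⟩) (C ⟨j + 1, by omega⟩) i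
        (t * ((n : ℝ) - 1) - (j : ℝ)) := by
  set w := t * ((n : ℝ) - 1) with hwdef
  set m := min (⌊w⌋₊) (n - 2) with hm
  have hmn : m ≤ n - 2 := min_le_right _ _
  have hw0 : (0 : ℝ) ≤ w := le_trans (by positivity) h0
  have hfl : j ≤ ⌊w⌋₊ := Nat.le_floor h0
  have hfu : ⌊w⌋₊ ≤ j + 1 := by
    have : w ≤ ((j + 1 : ℕ) : ℝ) := by push_cast; linarith
    calc ⌊w⌋₊ ≤ ⌊((j + 1 : ℕ) : ℝ)⌋₊ := Nat.floor_mono this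
    _ = j + 1 := Nat.floor_natCast _
  have hrfl : gammaBarN hd hk hn C t =
      fun i => gammaBar hd hk (C ⟨m, by omega⟩) (C ⟨m + 1, by omega⟩) i (w - (m : ℝ)) := rfl
  by_cases hmj : m = j
  · rw [hrfl]
    funext i
    rw [show (⟨m, by omega⟩ : Fin n) = ⟨j, by omega⟩ from Fin.ext hmj,
      show (⟨m + 1, by omega⟩ : Fin n) = ⟨j + 1, by omega⟩ from Fin.ext (by simp [hmj]),
      show w - (m : ℝ) = w - (j : ℝ) by rw [hmj]]
  · have hflj : ⌊w⌋₊ = j + 1 := by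
      rcases Nat.eq_or_lt_of_le hfl with h | h
      · exfalso; apply hmj; rw [hm, ← h, min_eq_left]; omega
      · omega
    have hmj1 : m = j + 1 := by
      rw [hm, hflj]
      rcases Nat.eq_or_lt_of_le hjn with h | h
      · exfalso; apply hmj; rw [hm, hflj, h, min_eq_right]; omega
      · exact min_eq_left (by omega)
    have hwj : w = (j : ℝ) + 1 := by
      have : ((j + 1 : ℕ) : ℝ) ≤ w := by
        rw [← hflj]; exact Nat.floor_le hw0
      push_cast at this
      linarith
    rw [hrfl]
    funext i
    rw [show w - (m : ℝ) = 0 by rw [hwj, hmj1]; push_cast; ring,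
      gammaBar_zero, show w - (j : ℝ) = 1 by rw [hwj]; ring, gammaBar_one,
      show (⟨m, by omega⟩ : Fin n) = ⟨j + 1, by omega⟩ from Fin.ext hmj1]

lemma exists_piece {n : ℕ} (hn : 2 ≤ n) {t : ℝ} (ht0 : 0 ≤ t) (ht1 : t ≤ 1) :
    ∃ j : ℕ, j ≤ n - 2 ∧ (j : ℝ) ≤ t * ((n : ℝ) - 1) ∧ t * ((n : ℝ) - 1) ≤ (j : ℝ) + 1 := by
  have hn2 : (2 : ℝ) ≤ (n : ℝ) := by exact_mod_cast hn
  set w := t * ((n : ℝ) - 1) with hwdef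
  have hw0 : 0 ≤ w := mul_nonneg ht0 (by linarith)
  have hwn : w ≤ (n : ℝ) - 1 :=
    le_trans (mul_le_mul_of_nonneg_right ht1 (by linarith)) (by linarith)
  refine ⟨min ⌊w⌋₊ (n - 2), min_le_right _ _, ?_, ?_⟩
  · exact le_trans (Nat.cast_le.mpr (min_le_left _ _)) (Nat.floor_le hw0)
  · by_cases h : ⌊w⌋₊ ≤ n - 2
    · rw [min_eq_left h]
      have := Nat.lt_floor_add_one w
      linarith
    · rw [min_eq_right (le_of_not_ge h)]
      have hcast : ((n - 2 : ℕ) : ℝ) = (n : ℝ) - 2 := by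
        rw [Nat.cast_sub (by omega : 2 ≤ n)]; norm_num
      rw [hcast]
      linarith

lemma gammaBarN_mem {d k n : ℕ} (hd : Even d) (hk : 2 ≤ k) (hn : 2 ≤ n)
    {C : Fin n → (Fin k → E d)} (hC : C ∈ Ctup d k n hk hn) {t : ℝ}
    (ht0 : 0 ≤ t) (ht1 : t ≤ 1) : gammaBarN hd hk hn C t ∈ Conf d k := by
  obtain ⟨j, hjn, h0, h1⟩ := exists_piece hn ht0 ht1
  rw [gammaBarN_piece hd hk hn C hjn h0 h1]
  refine gammaBar_inj hd hk (hC.1 ⟨j, by omega⟩).1 (hC.1 ⟨j + 1, by omega⟩).1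
    (hC.1 ⟨j, by omega⟩).2 (hC.1 ⟨j + 1, by omega⟩).2
    ((hC.2 ⟨j + 1, by omega⟩).trans (hC.2 ⟨j, by omega⟩).symm)
    (by linarith) (by linarith)

lemma gammaBarN_eval {d k n : ℕ} (hd : Even d) (hk : 2 ≤ k) (hn : 2 ≤ n)
    (C : Fin n → (Fin k → E d)) (i : Fin n) :
    gammaBarN hd hk hn C (((i : ℕ) : ℝ) / ((n : ℝ) - 1)) = C i := by
  have hn2 : (2 : ℝ) ≤ (n : ℝ) := by exact_mod_cast hn
  have hn1 : ((n : ℝ) - 1) ≠ 0 := by linarith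
  have hw : ((i : ℕ) : ℝ) / ((n : ℝ) - 1) * ((n : ℝ) - 1) = ((i : ℕ) : ℝ) :=
    div_mul_cancel₀ _ hn1
  by_cases hi : (i : ℕ) ≤ n - 2
  · rw [gammaBarN_piece hd hk hn C hi (by rw [hw]) (by rw [hw]; linarith)]
    funext m
    rw [show ((i : ℕ) : ℝ) / ((n : ℝ) - 1) * ((n : ℝ) - 1) - ((i : ℕ) : ℝ) = 0 by
      rw [hw]; ring, gammaBar_zero]
  · have hi' : (i : ℕ) = n - 1 := by have := i.isLt; omega
    have hcast : ((n - 2 : ℕ) : ℝ) = (n : ℝ) - 2 := by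
      rw [Nat.cast_sub (by omega : 2 ≤ n)]; norm_num
    have hwi : ((i : ℕ) : ℝ) = (n : ℝ) - 1 := by
      rw [hi', Nat.cast_sub (by omega : 1 ≤ n)]; norm_num
    rw [gammaBarN_piece hd hk hn C (le_refl (n - 2))
      (by rw [hw, hwi, hcast]; linarith) (by rw [hw, hwi, hcast]; linarith)]
    funext m
    rw [show ((i : ℕ) : ℝ) / ((n : ℝ) - 1) * ((n : ℝ) - 1) - ((n - 2 : ℕ) : ℝ) = 1 by
      rw [hw, hwi, hcast]; ring, gammaBar_one]
    exact congrFun (congrArg C (Fin.ext (by omega : n - 2 + 1 = (i : ℕ)))) m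

lemma continuous_gammaBarN {d k n : ℕ} (hd : Even d) (hk : 2 ≤ k) (hn : 2 ≤ n) :
    Continuous (fun p : ↥(Ctup d k n hk hn) × unitInterval =>
      gammaBarN hd hk hn (p.1 : Fin n → (Fin k → E d)) (p.2 : ℝ)) := by
  set S : Fin (n - 1) → Set (↥(Ctup d k n hk hn) × unitInterval) := fun j =>
    {p | ((j : ℕ) : ℝ) ≤ (p.2 : ℝ) * ((n : ℝ) - 1) ∧
      (p.2 : ℝ) * ((n : ℝ) - 1) ≤ ((j : ℕ) : ℝ) + 1} with hS
  have hwcont : Continuous fun p : ↥(Ctup d k n hk hn) × unitInterval =>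
      (p.2 : ℝ) * ((n : ℝ) - 1) :=
    (continuous_subtype_val.comp continuous_snd).mul continuous_const
  refine (locallyFinite_of_finite S).continuous ?_ ?_ ?_
  · refine Set.eq_univ_of_forall fun p => ?_
    obtain ⟨j, hjn, h0, h1⟩ := exists_piece hn p.2.2.1 p.2.2.2
    refine Set.mem_iUnion.mpr ⟨⟨j, by omega⟩, h0, h1⟩
  · intro j
    exact (isClosed_le continuous_const hwcont).inter (isClosed_le hwcont continuous_const)
  · intro j
    have hjn : (j : ℕ) ≤ n - 2 := by have := j.isLt; omega
    have hcont : Continuous fun p : ↥(Ctup d k n hk hn) × unitInterval =>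
        (fun i => gammaBar hd hk ((p.1 : Fin n → (Fin k → E d)) ⟨(j : ℕ), by omega⟩)
          ((p.1 : Fin n → (Fin k → E d)) ⟨(j : ℕ) + 1, by omega⟩) i
          ((p.2 : ℝ) * ((n : ℝ) - 1) - ((j : ℕ) : ℝ))) := by
      refine continuous_pi fun i => ?_
      refine continuous_gammaBar hd hk
        ((continuous_apply _).comp (continuous_subtype_val.comp continuous_fst))
        ((continuous_apply _).comp (continuous_subtype_val.comp continuous_fst))
        (hwcont.sub continuous_const) ?_ i
      intro p
      exact (p.1.2.1 ⟨(j : ℕ), by omega⟩).1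
    refine ContinuousOn.congr hcont.continuousOn ?_
    intro p hp
    exact gammaBarN_piece hd hk hn _ hjn hp.1 hp.2

/-- For even d ≥ 2 and k, n ≥ 2, concatenating the explicit
two-point planners Γ̄(C_i, C_{i+1}) yields a continuous section
Γ̄_n : 𝒞(n) → P(F(ℝ^d,k)) of the evaluation map e_n over 𝒞(n). -/
theorem stmt16 (d k n : ℕ) (hd2 : 2 ≤ d) (hd : Even d) (hk : 2 ≤ k) (hn : 2 ≤ n) :
    ∃ s : ↥(Ctup d k n hk hn) → C(unitInterval, ↥(Conf d k)),
      Continuous s ∧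
      (∀ (C : ↥(Ctup d k n hk hn)) (t : unitInterval),
        ((s C t : Fin k → E d)) =
          gammaBarN hd hk hn ((C : Fin n → (Fin k → E d))) (t : ℝ)) ∧
      (∀ (C : ↥(Ctup d k n hk hn)) (i : Fin n),
        (s C (eTime n i) : Fin k → E d) = (C : Fin n → (Fin k → E d)) i) := by
  
  have hF : Continuous (fun p : ↥(Ctup d k n hk hn) × unitInterval =>
      (⟨gammaBarN hd hk hn (p.1 : Fin n → (Fin k → E d)) (p.2 : ℝ),
        gammaBarN_mem hd hk hn p.1.2 p.2.2.1 p.2.2.2⟩ : ↥(Conf d k))) :=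
    (continuous_gammaBarN hd hk hn).subtype_mk _
  set F : C(↥(Ctup d k n hk hn) × unitInterval, ↥(Conf d k)) := ⟨_, hF⟩ with hFdef
  refine ⟨fun Cc => F.curry Cc, F.curry.continuous, ?_, ?_⟩
  · intro C t
    rfl
  · intro C i
    have hn2 : (2 : ℝ) ≤ (n : ℝ) := by exact_mod_cast hn
    have hle : ((i : ℕ) : ℝ) ≤ (n : ℝ) - 1 := by
      have := i.isLt
      have : ((i : ℕ) : ℝ) ≤ ((n : ℕ) : ℝ) - 1 := by
        have h1 : (i : ℕ) + 1 ≤ n := i.isLt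
        have := (Nat.cast_le (α := ℝ)).mpr h1
        push_cast at this
        linarith
      exact this
    have hmem : ((i : ℕ) : ℝ) / ((n : ℝ) - 1) ∈ Set.Icc (0 : ℝ) 1 := by
      constructor
      · exact div_nonneg (by positivity) (by linarith)
      · rw [div_le_one (by linarith : (0:ℝ) < (n : ℝ) - 1)]
        exact hle
    have hco : ((eTime n i : unitInterval) : ℝ) = ((i : ℕ) : ℝ) / ((n : ℝ) - 1) := by
      rw [eTime, Set.projIcc_of_mem zero_le_one hmem]
    show gammaBarN hd hk hn ((C : Fin n → (Fin k → E d))) ((eTime n i : unitInterval) : ℝ)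
      = (C : Fin n → (Fin k → E d)) i
    rw [hco]
    exact gammaBarN_eval hd hk hn _ i
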